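/- Fix positive integers β and κ, and let C_S, C_T be legal configurations for capacity κ with |C_S| = |C_T| and U(C_S) = U(C_T) = U. The Partition ILP associated with (C_S, C_T, β, κ) is feasible if and only if there exist a β-bounded partition P of U and a P-conforming reconfiguration sequence for capacity κ from C_S to C_T. -/

import Mathlib

/-- A bunch is a multiset of items (item = positive integer, encoded as `ℕ`). -/
abbrev Bunch := Multiset ℕ

/-- A configuration is a multiset of bunches. -/
abbrev Config := Multiset Bunch

/-- The volume of a bunch is the sum of its items. -/
def vol (B : Bunch) : ℕ := B.sum

/-- A configuration is legal for capacity `κ` if every bunch has volume at most `κ`. -/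
def Legal (κ : ℕ) (C : Config) : Prop := ∀ B ∈ C, vol B ≤ κ

/-- The total slack of a configuration for capacity `κ`. -/
def slackSum (κ : ℕ) (C : Config) : ℕ := (C.map fun B => κ - vol B).sum

/-- `C'` is obtained from `C` by moving the single item `u` from a donor bunch `Bd`
to a (different occurrence of a) recipient bunch `Br`, respecting the capacity `κ`. -/
def AdjacentVia (κ u : ℕ) (C C' : Config) : Prop :=
  ∃ (rest : Config) (Bd Br : Bunch),
    u ∈ Bd ∧ vol Br + u ≤ κ ∧
    C = Bd ::ₘ Br ::ₘ rest ∧ C' = Bd.erase u ::ₘ (u ::ₘ Br) ::ₘ rest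

/-- Two configurations are adjacent if one is obtained from the other by moving a single item. -/
def Adjacent (κ : ℕ) (C C' : Config) : Prop := ∃ u, AdjacentVia κ u C C'

/-- One step of a reconfiguration sequence: both configurations are legal and adjacent. -/
def Step (κ : ℕ) (C C' : Config) : Prop := Legal κ C ∧ Legal κ C' ∧ Adjacent κ C C'

/-- `CS` is reconfigurable to `CT` for capacity `κ`: there is a sequence of legal
configurations for capacity `κ` from `CS` to `CT` with consecutive ones adjacent. -/
def Reconfigurable (κ : ℕ) (CS CT : Config) : Prop :=
  Relation.ReflTransGen (Step κ) CS CT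

/-- A subconfiguration: a nonempty multiset of at most `β` bunches, each of volume
at most `κ`, whose items form a sub-multiset of `U`. -/
def IsSubconf (β κ : ℕ) (U : Multiset ℕ) (D : Config) : Prop :=
  D ≠ 0 ∧ Multiset.card D ≤ β ∧ (∀ B ∈ D, vol B ≤ κ) ∧ D.sum ≤ U

/-- Feasibility of the Partition ILP associated with `(CS, CT, β, κ)`.
The graph `G` has vertices `x_D, y_D, z_D` for `D ∈ β-Subs` and edges
`x_D → y_D`, `y_D → y_{D'}` (for adjacent `D, D'`), and `y_D → z_D`.
Here `fx D`, `fz D` and `fy D D'` are the (non-negative integer) flow values on the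
edges `x_D → y_D`, `y_D → z_D` and `y_D → y_{D'}` respectively, and the demands are
`d(x_D) = -(dx D) ≤ 0` and `d(z_D) = dz D ≥ 0`; all variables vanish outside the
(finite) edge set of `G` and have finite support. -/
def PartitionILPFeasible (β κ : ℕ) (CS CT : Config) : Prop :=
  ∃ (fx fz dx dz : Config → ℕ) (fy : Config → Config → ℕ),
    (∀ D, ¬ IsSubconf β κ CS.sum D → fx D = 0 ∧ fz D = 0 ∧ dx D = 0 ∧ dz D = 0) ∧
    (∀ D D', ¬ (IsSubconf β κ CS.sum D ∧ IsSubconf β κ CS.sum D' ∧ Adjacent κ D D') →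
      fy D D' = 0) ∧
    (Function.support dx).Finite ∧ (Function.support dz).Finite ∧
    (Function.support fx).Finite ∧ (Function.support fz).Finite ∧
    (Function.support (Function.uncurry fy)).Finite ∧
    (∀ D, IsSubconf β κ CS.sum D →
      fx D = dx D ∧ fz D = dz D ∧
      fx D + ∑ᶠ D', fy D' D = fz D + ∑ᶠ D', fy D D') ∧
    (∀ B : Bunch, B ≤ CS.sum → vol B ≤ κ →
      (∑ᶠ D, Multiset.count B D * dx D) = Multiset.count B CS ∧
      (∑ᶠ D, Multiset.count B D * dz D) = Multiset.count B CT)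

/-- `P` is a partition of the multiset `U` of items: a finite sequence of parts
`(U_i, k_i)` with `k_i` a positive number of bunches and the `U_i` summing to `U`. -/
def IsPartition (U : Multiset ℕ) (P : List (Multiset ℕ × ℕ)) : Prop :=
  (∀ p ∈ P, 0 < p.2) ∧ (P.map Prod.fst).sum = U

/-- `P` is `β`-bounded: every part uses at most `β` bunches. -/
def BBounded (β : ℕ) (P : List (Multiset ℕ × ℕ)) : Prop := ∀ p ∈ P, p.2 ≤ β

/-- `A` is an assignment of the partition `P` for capacity `κ`: a sequence of portions,
where the `i`-th portion is a multiset of exactly `k_i` bunches, each of volume at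
most `κ`, whose multiset union of items equals `U_i`. -/
def IsAssignment (κ : ℕ) (P : List (Multiset ℕ × ℕ)) (A : List Config) : Prop :=
  List.Forall₂
    (fun p Ai => Multiset.card Ai = p.2 ∧ Multiset.sum Ai = p.1 ∧ ∀ B ∈ Ai, vol B ≤ κ)
    P A

/-- Two assignments are adjacent: they agree in all but exactly one index `j`, and
their `j`-th portions are adjacent configurations. -/
def AdjAssign (κ : ℕ) (A A' : List Config) : Prop :=
  A.length = A'.length ∧ ∃ j < A.length,
    Adjacent κ (A.getD j 0) (A'.getD j 0) ∧
    ∀ i < A.length, i ≠ j → A.getD i 0 = A'.getD i 0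

/-- There exist a `β`-bounded partition `P` of the underlying items and a
`P`-conforming reconfiguration sequence for capacity `κ` from `CS` to `CT`. -/
def PConformReconf (β κ : ℕ) (CS CT : Config) : Prop :=
  ∃ P : List (Multiset ℕ × ℕ), IsPartition CS.sum P ∧ BBounded β P ∧
    ∃ AS AT : List Config, IsAssignment κ P AS ∧ IsAssignment κ P AT ∧
      AS.sum = CS ∧ AT.sum = CT ∧
      Relation.ReflTransGen
        (fun A A' => IsAssignment κ P A ∧ IsAssignment κ P A' ∧ AdjAssign κ A A') AS AT

namespace Stmt15Aux

/-- directed adjacency between subconfigurations -/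
def AdjS (β κ : ℕ) (U : Multiset ℕ) (D D' : Config) : Prop :=
  IsSubconf β κ U D ∧ IsSubconf β κ U D' ∧ Adjacent κ D D'

lemma adj_card {κ : ℕ} {C C' : Config} (h : Adjacent κ C C') :
    Multiset.card C' = Multiset.card C := by
  obtain ⟨u, rest, Bd, Br, _, _, rfl, rfl⟩ := h
  simp

lemma adj_sum {κ : ℕ} {C C' : Config} (h : Adjacent κ C C') : C'.sum = C.sum := by
  obtain ⟨u, rest, Bd, Br, hu, _, rfl, rfl⟩ := h
  have : u ::ₘ Bd.erase u = Bd := Multiset.cons_erase hu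
  simp only [Multiset.sum_cons]
  calc Bd.erase u + ((u ::ₘ Br) + rest.sum) = (u ::ₘ Bd.erase u) + (Br + rest.sum) := by
        simp only [← Multiset.singleton_add]; abel
    _ = Bd + (Br + rest.sum) := by rw [this]

lemma rtg_card_sum {β κ : ℕ} {U : Multiset ℕ} {C C' : Config}
    (h : Relation.ReflTransGen (AdjS β κ U) C C') :
    Multiset.card C' = Multiset.card C ∧ C'.sum = C.sum := by
  induction h with
  | refl => exact ⟨rfl, rfl⟩
  | tail _ hadj ih => exact ⟨(adj_card hadj.2.2).trans ih.1, (adj_sum hadj.2.2).trans ih.2⟩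

lemma rtg_sub {β κ : ℕ} {U : Multiset ℕ} {C C' : Config}
    (h : Relation.ReflTransGen (AdjS β κ U) C C') (hC : IsSubconf β κ U C) :
    IsSubconf β κ U C' := by
  induction h with
  | refl => exact hC
  | tail _ hadj _ => exact hadj.2.1

/-- build a multiset from a finitely supported multiplicity function -/
noncomputable def ofFn {α : Type*} [DecidableEq α] (f : α → ℕ)
    (hf : (Function.support f).Finite) : Multiset α :=
  ∑ a ∈ hf.toFinset, Multiset.replicate (f a) a

lemma count_ofFn {α : Type*} [DecidableEq α] (f : α → ℕ)
    (hf : (Function.support f).Finite) (a : α) : Multiset.count a (ofFn f hf) = f a := by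
  rw [ofFn, Multiset.count_sum']
  rw [Finset.sum_congr rfl (fun b _ => Multiset.count_replicate a b (f b))]
  rw [Finset.sum_ite_eq' hf.toFinset a f]
  by_cases h : a ∈ hf.toFinset
  · simp [h]
  · simp only [h, if_false]
    have : f a = 0 := by
      by_contra hne
      exact h (hf.mem_toFinset.2 hne)
    omega

lemma count_map_snd (F : Multiset (Config × Config)) (D : Config) :
    ∑ᶠ D', Multiset.count (D', D) F = Multiset.count D (F.map Prod.snd) := by
  induction F using Multiset.induction with
  | empty => simp
  | cons q F' ih =>
    have h1 : ∀ D', Multiset.count (D', D) (q ::ₘ F')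
        = Multiset.count (D', D) F' + if (D', D) = q then 1 else 0 := by
      intro D'; exact Multiset.count_cons _ _ _
    rw [finsum_congr h1]
    have hs1 : (Function.support fun D' => Multiset.count (D', D) F').Finite := by
      apply Set.Finite.subset (Multiset.finite_toSet (F'.map Prod.fst))
      intro D' hD'
      simp only [Function.mem_support] at hD'
      have : (D', D) ∈ F' := Multiset.count_pos.1 (Nat.pos_of_ne_zero hD')
      simpa using Multiset.mem_map_of_mem Prod.fst this
    have hs2 : (Function.support fun D' => if ((D', D) : Config × Config) = q then 1 else 0).Finite := by
      apply Set.Finite.subset (Set.finite_singleton q.1)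
      intro D' hD'
      simp only [Function.mem_support] at hD'
      rcases eq_or_ne ((D', D) : Config × Config) q with heq | hne
      · simp [← heq]
      · exact absurd (if_neg hne) hD'
    rw [finsum_add_distrib hs1 hs2, ih]
    have h2 : (∑ᶠ D', if ((D', D) : Config × Config) = q then 1 else 0)
        = if D = q.2 then 1 else 0 := by
      by_cases hq : D = q.2
      · rw [finsum_eq_single _ q.1]
        · subst hq; simp
        · intro b hb
          rw [if_neg]
          intro heq
          exact hb (congrArg Prod.fst heq)
      · rw [if_neg hq]
        apply finsum_eq_zero_of_forall_eq_zero
        intro D'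
        rw [if_neg]
        intro heq
        exact hq (congrArg Prod.snd heq)
    rw [h2, Multiset.map_cons, Multiset.count_cons]

lemma count_map_fst (F : Multiset (Config × Config)) (D : Config) :
    ∑ᶠ D', Multiset.count (D, D') F = Multiset.count D (F.map Prod.fst) := by
  induction F using Multiset.induction with
  | empty => simp
  | cons q F' ih =>
    have h1 : ∀ D', Multiset.count (D, D') (q ::ₘ F')
        = Multiset.count (D, D') F' + if (D, D') = q then 1 else 0 := by
      intro D'; exact Multiset.count_cons _ _ _
    rw [finsum_congr h1]
    have hs1 : (Function.support fun D' => Multiset.count (D, D') F').Finite := by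
      apply Set.Finite.subset (Multiset.finite_toSet (F'.map Prod.snd))
      intro D' hD'
      simp only [Function.mem_support] at hD'
      have : (D, D') ∈ F' := Multiset.count_pos.1 (Nat.pos_of_ne_zero hD')
      simpa using Multiset.mem_map_of_mem Prod.snd this
    have hs2 : (Function.support fun D' => if ((D, D') : Config × Config) = q then 1 else 0).Finite := by
      apply Set.Finite.subset (Set.finite_singleton q.2)
      intro D' hD'
      simp only [Function.mem_support] at hD'
      rcases eq_or_ne ((D, D') : Config × Config) q with heq | hne
      · simp [← heq]
      · exact absurd (if_neg hne) hD'
    rw [finsum_add_distrib hs1 hs2, ih]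
    have h2 : (∑ᶠ D', if ((D, D') : Config × Config) = q then 1 else 0)
        = if D = q.1 then 1 else 0 := by
      by_cases hq : D = q.1
      · rw [finsum_eq_single _ q.2]
        · subst hq; simp
        · intro b hb
          rw [if_neg]
          intro heq
          exact hb (congrArg Prod.snd heq)
      · rw [if_neg hq]
        apply finsum_eq_zero_of_forall_eq_zero
        intro D'
        rw [if_neg]
        intro heq
        exact hq (congrArg Prod.fst heq)
    rw [h2, Multiset.map_cons, Multiset.count_cons]

lemma count_sum_mul (B : Bunch) (S : Multiset Config) :
    ∑ᶠ D, Multiset.count B D * Multiset.count D S = Multiset.count B S.sum := by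
  induction S using Multiset.induction with
  | empty => simp
  | cons D0 S' ih =>
    have h1 : ∀ D, Multiset.count B D * Multiset.count D (D0 ::ₘ S')
        = Multiset.count B D * Multiset.count D S' + if D = D0 then Multiset.count B D0 else 0 := by
      intro D
      rw [Multiset.count_cons]
      by_cases h : D = D0 <;> simp [h, Nat.mul_add]
    rw [finsum_congr h1]
    have hs1 : (Function.support fun D => Multiset.count B D * Multiset.count D S').Finite := by
      apply Set.Finite.subset (Multiset.finite_toSet S')
      intro D hD
      simp only [Function.mem_support] at hD
      have : Multiset.count D S' ≠ 0 := by
        intro h; rw [h, Nat.mul_zero] at hD; exact hD rfl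
      exact Multiset.count_pos.1 (Nat.pos_of_ne_zero this)
    have hs2 : (Function.support fun D => if D = D0 then Multiset.count B D0 else 0).Finite := by
      apply Set.Finite.subset (Set.finite_singleton D0)
      intro D hD
      simp only [Function.mem_support] at hD
      by_contra hne
      exact hD (if_neg hne)
    rw [finsum_add_distrib hs1 hs2, ih]
    have h2 : (∑ᶠ D, if D = D0 then Multiset.count B D0 else 0) = Multiset.count B D0 := by
      rw [finsum_eq_single _ D0]
      · simp
      · intro b hb; exact if_neg hb
    rw [h2, Multiset.sum_cons, Multiset.count_add]
    omega

end Stmt15Aux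

namespace Stmt15Aux

lemma extract (β κ : ℕ) (U : Multiset ℕ) :
    ∀ (n : ℕ) (F : Multiset (Config × Config)), Multiset.card F ≤ n →
    ∀ (E Z : Multiset Config) (D0 : Config),
    (∀ p ∈ F, AdjS β κ U p.1 p.2) →
    (∀ D, Multiset.count D (D0 ::ₘ E) + Multiset.count D (F.map Prod.snd)
        = Multiset.count D Z + Multiset.count D (F.map Prod.fst)) →
    ∃ Dend F', Relation.ReflTransGen (AdjS β κ U) D0 Dend ∧ Dend ∈ Z ∧ F' ≤ F ∧
      (∀ D, Multiset.count D E + Multiset.count D (F'.map Prod.snd)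
          = Multiset.count D (Z.erase Dend) + Multiset.count D (F'.map Prod.fst)) := by
  intro n
  induction n with
  | zero =>
    intro F hF E Z D0 hadj hcons
    -- F = 0
    have hF0 : F = 0 := by
      rw [← Multiset.card_eq_zero]; omega
    subst hF0
    refine ⟨D0, 0, Relation.ReflTransGen.refl, ?_, le_refl _, ?_⟩
    · have := hcons D0
      simp at this
      exact Multiset.count_pos.1 (by omega)
    · intro D
      have h1 := hcons D
      have h2 : Z = D0 ::ₘ Z.erase D0 := by
        refine (Multiset.cons_erase ?_).symm
        have := hcons D0
        simp at this
        exact Multiset.count_pos.1 (by omega)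
      rw [h2] at h1
      simp only [Multiset.count_cons, Multiset.map_zero, Multiset.count_zero] at *
      omega
  | succ n ih =>
    intro F hF E Z D0 hadj hcons
    by_cases hD0 : D0 ∈ Z
    · refine ⟨D0, F, Relation.ReflTransGen.refl, hD0, le_refl _, ?_⟩
      intro D
      have h1 := hcons D
      have h2 : Z = D0 ::ₘ Z.erase D0 := (Multiset.cons_erase hD0).symm
      rw [h2] at h1
      simp only [Multiset.count_cons] at h1
      omega
    · -- find an outgoing edge from D0
      have hZ0 : Multiset.count D0 Z = 0 := Multiset.count_eq_zero_of_notMem hD0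
      have hout : Multiset.count D0 (F.map Prod.fst) ≥ 1 := by
        have := hcons D0
        simp only [Multiset.count_cons_self] at this
        omega
      have hmem : D0 ∈ F.map Prod.fst := Multiset.count_pos.1 (by omega)
      obtain ⟨p, hpF, hp1⟩ := Multiset.mem_map.1 hmem
      have hFsplit : p ::ₘ F.erase p = F := Multiset.cons_erase hpF
      set F₂ := F.erase p with hF2
      have hcard2 : Multiset.card F₂ ≤ n := by
        have : Multiset.card F = Multiset.card F₂ + 1 := by
          rw [← hFsplit]; simp
        omega
      have hadj2 : ∀ q ∈ F₂, AdjS β κ U q.1 q.2 := by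
        intro q hq
        exact hadj q (Multiset.mem_of_le (Multiset.erase_le p F) hq)
      have hcons2 : ∀ D, Multiset.count D (p.2 ::ₘ E) + Multiset.count D (F₂.map Prod.snd)
          = Multiset.count D Z + Multiset.count D (F₂.map Prod.fst) := by
        intro D
        have h1 := hcons D
        rw [← hFsplit] at h1
        simp only [Multiset.map_cons, Multiset.count_cons, hp1] at h1 ⊢
        by_cases h2 : D = D0 <;> by_cases h3 : D = p.2 <;> simp [h2, h3] at h1 ⊢ <;> omega
      obtain ⟨Dend, F', hwalk, hZend, hle, hcons'⟩ := ih F₂ hcard2 E Z p.2 hadj2 hcons2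
      have hadjp : AdjS β κ U D0 p.2 := by
        have := hadj p hpF
        rwa [hp1] at this
      exact ⟨Dend, F', Relation.ReflTransGen.head hadjp hwalk, hZend,
        le_trans hle (Multiset.erase_le p F), hcons'⟩

lemma decompose (β κ : ℕ) (U : Multiset ℕ) :
    ∀ (E : Multiset Config) (F : Multiset (Config × Config)) (Z : Multiset Config),
    (∀ p ∈ F, AdjS β κ U p.1 p.2) → (∀ D ∈ E, IsSubconf β κ U D) →
    (∀ D, Multiset.count D E + Multiset.count D (F.map Prod.snd)
        = Multiset.count D Z + Multiset.count D (F.map Prod.fst)) →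
    ∃ L : List (Config × Config),
      (∀ p ∈ L, IsSubconf β κ U p.1 ∧ IsSubconf β κ U p.2 ∧
        Relation.ReflTransGen (AdjS β κ U) p.1 p.2) ∧
      (↑(L.map Prod.fst) : Multiset Config) = E ∧
      (↑(L.map Prod.snd) : Multiset Config) = Z := by
  intro E
  induction E using Multiset.induction with
  | empty =>
    intro F Z hadj _ hcons
    refine ⟨[], by simp, by simp, ?_⟩
    have hZF : Z + F.map Prod.fst = F.map Prod.snd := by
      apply Multiset.ext.2
      intro D
      have := hcons D
      simp only [Multiset.count_zero, Multiset.count_add] at *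
      omega
    have hcard : Multiset.card Z = 0 := by
      have := congrArg Multiset.card hZF
      simp only [Multiset.card_add, Multiset.card_map] at this
      omega
    simp [Multiset.card_eq_zero.1 hcard]
  | cons D0 E' ihE =>
    intro F Z hadj hsub hcons
    obtain ⟨Dend, F', hwalk, hZend, hle, hcons'⟩ :=
      extract β κ U (Multiset.card F) F (le_refl _) E' Z D0 hadj hcons
    have hsubD0 : IsSubconf β κ U D0 := hsub D0 (Multiset.mem_cons_self _ _)
    obtain ⟨L, hL, hLfst, hLsnd⟩ := ihE F' (Z.erase Dend)
      (fun p hp => hadj p (Multiset.mem_of_le hle hp))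
      (fun D hD => hsub D (Multiset.mem_cons_of_mem hD)) hcons'
    refine ⟨(D0, Dend) :: L, ?_, ?_, ?_⟩
    · intro p hp
      rcases List.mem_cons.1 hp with rfl | hp
      · exact ⟨hsubD0, rtg_sub hwalk hsubD0, hwalk⟩
      · exact hL p hp
    · simp only [List.map_cons]
      rw [← Multiset.cons_coe, hLfst]
    · simp only [List.map_cons]
      rw [← Multiset.cons_coe, hLsnd]
      exact Multiset.cons_erase hZend

end Stmt15Aux

namespace Stmt15Aux

def StepA (κ : ℕ) (P : List (Multiset ℕ × ℕ)) (A A' : List Config) : Prop :=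
  IsAssignment κ P A ∧ IsAssignment κ P A' ∧ AdjAssign κ A A'

def Pof (L : List (Config × Config)) : List (Multiset ℕ × ℕ) :=
  L.map fun p => (p.1.sum, Multiset.card p.1)

lemma isAssign_firsts (β κ : ℕ) (U : Multiset ℕ) (L : List (Config × Config))
    (h : ∀ p ∈ L, IsSubconf β κ U p.1) :
    IsAssignment κ (Pof L) (L.map Prod.fst) := by
  induction L with
  | nil => exact List.Forall₂.nil
  | cons p L' ih =>
    refine List.Forall₂.cons ⟨rfl, rfl, (h p (List.mem_cons_self)).2.2.1⟩ ?_
    exact ih (fun q hq => h q (List.mem_cons_of_mem _ hq))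

lemma lift_head (β κ : ℕ) (U : Multiset ℕ) (Pt : List (Multiset ℕ × ℕ)) (At : List Config)
    (hPA : IsAssignment κ Pt At) (s : Multiset ℕ) (k : ℕ) :
    ∀ C C', Relation.ReflTransGen (AdjS β κ U) C C' →
    IsSubconf β κ U C → Multiset.card C = k → C.sum = s →
    Relation.ReflTransGen (StepA κ ((s, k) :: Pt)) (C :: At) (C' :: At) := by
  intro C C' hw
  induction hw using Relation.ReflTransGen.head_induction_on with
  | refl => intro _ _ _; exact Relation.ReflTransGen.refl
  | head hadj hw' ih =>
    rename_i a c
    intro hsubA hcardA hsumA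
    have hsubC : IsSubconf β κ U c := hadj.2.1
    have hcardC : Multiset.card c = k := (adj_card hadj.2.2).trans hcardA
    have hsumC : c.sum = s := (adj_sum hadj.2.2).trans hsumA
    refine Relation.ReflTransGen.head ?_ (ih hsubC hcardC hsumC)
    refine ⟨List.Forall₂.cons ⟨hcardA, hsumA, hsubA.2.2.1⟩ hPA,
      List.Forall₂.cons ⟨hcardC, hsumC, hsubC.2.2.1⟩ hPA, rfl, 0, by simp, ?_, ?_⟩
    · simpa using hadj.2.2
    · intro i _ hi
      obtain ⟨i', rfl⟩ := Nat.exists_eq_succ_of_ne_zero hi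
      simp

lemma lift_tail (κ : ℕ) (s : Multiset ℕ) (k : ℕ) (C : Config)
    (hC : Multiset.card C = k ∧ C.sum = s ∧ ∀ B ∈ C, vol B ≤ κ)
    (Pt : List (Multiset ℕ × ℕ)) :
    ∀ At At', Relation.ReflTransGen (StepA κ Pt) At At' →
    Relation.ReflTransGen (StepA κ ((s, k) :: Pt)) (C :: At) (C :: At') := by
  intro At At' hw
  induction hw with
  | refl => exact Relation.ReflTransGen.refl
  | tail _ hstep ih =>
    refine Relation.ReflTransGen.tail ih ?_
    obtain ⟨h1, h2, hlen, j, hj, hadj, hrest⟩ := hstep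
    refine ⟨List.Forall₂.cons ⟨hC.1, hC.2.1, hC.2.2⟩ h1,
      List.Forall₂.cons ⟨hC.1, hC.2.1, hC.2.2⟩ h2, by simp [hlen], j + 1, by simp; omega, ?_, ?_⟩
    · simpa using hadj
    · intro i hi hij
      match i with
      | 0 => simp
      | i' + 1 =>
        simp only [List.getD_cons_succ]
        exact hrest i' (by simpa using hi) (by omega)

lemma chainOf (β κ : ℕ) (U : Multiset ℕ) :
    ∀ L : List (Config × Config),
    (∀ p ∈ L, IsSubconf β κ U p.1 ∧ IsSubconf β κ U p.2 ∧
      Relation.ReflTransGen (AdjS β κ U) p.1 p.2) →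
    Relation.ReflTransGen (StepA κ (Pof L)) (L.map Prod.fst) (L.map Prod.snd) := by
  intro L
  induction L with
  | nil => intro _; exact Relation.ReflTransGen.refl
  | cons p L' ih =>
    intro h
    have hp := h p (List.mem_cons_self)
    have hL' : ∀ q ∈ L', IsSubconf β κ U q.1 ∧ IsSubconf β κ U q.2 ∧
        Relation.ReflTransGen (AdjS β κ U) q.1 q.2 :=
      fun q hq => h q (List.mem_cons_of_mem _ hq)
    have hfirsts : IsAssignment κ (Pof L') (L'.map Prod.fst) :=
      isAssign_firsts β κ U L' (fun q hq => (hL' q hq).1)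
    have hcs := rtg_card_sum hp.2.2
    have step1 : Relation.ReflTransGen (StepA κ (Pof (p :: L'))) (p.1 :: L'.map Prod.fst)
        (p.2 :: L'.map Prod.fst) :=
      lift_head β κ U (Pof L') (L'.map Prod.fst) hfirsts p.1.sum (Multiset.card p.1)
        p.1 p.2 hp.2.2 hp.1 rfl rfl
    have step2 : Relation.ReflTransGen (StepA κ (Pof (p :: L'))) (p.2 :: L'.map Prod.fst)
        (p.2 :: L'.map Prod.snd) :=
      lift_tail κ p.1.sum (Multiset.card p.1) p.2 ⟨hcs.1, hcs.2, hp.2.1.2.2.1⟩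
        (Pof L') _ _ (ih hL')
    simpa using step1.trans step2

lemma mem_msum {α : Type*} {B : α} {S : Multiset (Multiset α)} (h : B ∈ S.sum) :
    ∃ D ∈ S, B ∈ D := by
  induction S using Multiset.induction with
  | empty => simp at h
  | cons D S' ih =>
    rw [Multiset.sum_cons, Multiset.mem_add] at h
    rcases h with h | h
    · exact ⟨D, Multiset.mem_cons_self _ _, h⟩
    · obtain ⟨D', hD', hB⟩ := ih h
      exact ⟨D', Multiset.mem_cons_of_mem hD', hB⟩

lemma sum_map_sum (S : Multiset Config) : (S.map Multiset.sum).sum = S.sum.sum := by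
  induction S using Multiset.induction with
  | empty => simp
  | cons D S' ih => simp [ih]

end Stmt15Aux

namespace Stmt15Aux

lemma list_ext_getD : ∀ (l l' : List Config), l.length = l'.length →
    (∀ i < l.length, l.getD i 0 = l'.getD i 0) → l = l' := by
  intro l
  induction l with
  | nil => intro l' hlen _; exact (List.length_eq_zero_iff.1 hlen.symm).symm
  | cons a t ih =>
    intro l' hlen h
    match l' with
    | [] => simp at hlen
    | a' :: t' =>
      have h0 := h 0 (by simp)
      simp only [List.getD_cons_zero] at h0
      have ht : t = t' := by
        refine ih t' (by simpa using hlen) ?_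
        intro i hi
        have := h (i + 1) (by simpa using Nat.succ_lt_succ hi)
        simpa using this
      rw [h0, ht]

lemma set_cons : ∀ (l l' : List Config) (j : ℕ), l.length = l'.length → j < l.length →
    (∀ i < l.length, i ≠ j → l.getD i 0 = l'.getD i 0) →
    (l'.getD j 0) ::ₘ (↑l : Multiset Config) = (l.getD j 0) ::ₘ (↑l' : Multiset Config) := by
  intro l
  induction l with
  | nil => intro l' j _ hj; simp at hj
  | cons a t ih =>
    intro l' j hlen hj h
    match l' with
    | [] => simp at hlen
    | a' :: t' =>
      match j with
      | 0 =>
        have ht : t = t' := by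
          refine list_ext_getD t t' (by simpa using hlen) ?_
          intro i hi
          have := h (i + 1) (by simpa using Nat.succ_lt_succ hi) (by omega)
          simpa using this
        subst ht
        simp only [List.getD_cons_zero, ← Multiset.cons_coe]
        exact Multiset.cons_swap _ _ _
      | j' + 1 =>
        have h0 := h 0 (by simp) (by omega)
        simp only [List.getD_cons_zero] at h0
        have htail := ih t' j' (by simpa using hlen) (by simpa using hj) ?_
        · simp only [List.getD_cons_succ, ← Multiset.cons_coe]
          rw [Multiset.cons_swap, htail, h0, Multiset.cons_swap]
        · intro i hi hij
          have := h (i + 1) (by simpa using Nat.succ_lt_succ hi) (by omega)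
          simpa using this

lemma assign_mem_sub (β κ : ℕ) (U : Multiset ℕ) (P : List (Multiset ℕ × ℕ))
    (hPart : IsPartition U P) (hB : BBounded β P) :
    ∀ A, IsAssignment κ P A → ∀ C ∈ A, IsSubconf β κ U C := by
  intro A hA C hC
  -- find the corresponding p
  have : ∃ p ∈ P, Multiset.card C = p.2 ∧ C.sum = p.1 ∧ ∀ B ∈ C, vol B ≤ κ := by
    clear hPart hB
    induction hA with
    | nil => simp at hC
    | cons hrel htail ih =>
      rcases List.mem_cons.1 hC with rfl | hC'
      · exact ⟨_, List.mem_cons_self, hrel⟩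
      · obtain ⟨p, hp, hrest⟩ := ih hC'
        exact ⟨p, List.mem_cons_of_mem _ hp, hrest⟩
  obtain ⟨p, hpP, hcard, hsum, hvol⟩ := this
  refine ⟨?_, ?_, hvol, ?_⟩
  · intro h0
    have := hPart.1 p hpP
    rw [h0] at hcard
    simp at hcard
    omega
  · rw [hcard]; exact hB p hpP
  · rw [hsum, ← hPart.2]
    have : p.1 ∈ (↑(P.map Prod.fst) : Multiset (Multiset ℕ)) := by
      simp only [Multiset.mem_coe, List.mem_map]
      exact ⟨p, hpP, rfl⟩
    have hle := Multiset.le_sum_of_mem this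
    rwa [Multiset.sum_coe] at hle

lemma flowOf (β κ : ℕ) (U : Multiset ℕ) (P : List (Multiset ℕ × ℕ))
    (hPart : IsPartition U P) (hB : BBounded β P) :
    ∀ A A', Relation.ReflTransGen (StepA κ P) A A' →
    ∃ F : Multiset (Config × Config), (∀ q ∈ F, AdjS β κ U q.1 q.2) ∧
      ∀ D, Multiset.count D (↑A : Multiset Config) + Multiset.count D (F.map Prod.snd)
         = Multiset.count D (↑A' : Multiset Config) + Multiset.count D (F.map Prod.fst) := by
  intro A A' hw
  induction hw with
  | refl => exact ⟨0, by simp, fun D => by simp⟩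
  | tail hchain hstep ih =>
    rename_i A₁ A₂
    obtain ⟨F₁, hF₁, hcons₁⟩ := ih
    obtain ⟨h1, h2, hlen, j, hj, hadj, hrest⟩ := hstep
    set C := A₁.getD j 0 with hCdef
    set C' := A₂.getD j 0 with hC'def
    have hCmem : C ∈ A₁ := by
      rw [hCdef, List.getD_eq_getElem _ _ hj]
      exact List.getElem_mem _
    have hC'mem : C' ∈ A₂ := by
      rw [hC'def, List.getD_eq_getElem _ _ (by omega : j < A₂.length)]
      exact List.getElem_mem _
    have hsubC : IsSubconf β κ U C := assign_mem_sub β κ U P hPart hB A₁ h1 C hCmem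
    have hsubC' : IsSubconf β κ U C' := assign_mem_sub β κ U P hPart hB A₂ h2 C' hC'mem
    have hkey : C' ::ₘ (↑A₁ : Multiset Config) = C ::ₘ (↑A₂ : Multiset Config) :=
      set_cons A₁ A₂ j hlen hj hrest
    refine ⟨(C, C') ::ₘ F₁, ?_, ?_⟩
    · intro q hq
      rcases Multiset.mem_cons.1 hq with rfl | hq'
      · exact ⟨hsubC, hsubC', hadj⟩
      · exact hF₁ q hq'
    · intro D
      have hk := congrArg (Multiset.count D) hkey
      simp only [Multiset.count_cons] at hk
      have := hcons₁ D
      simp only [Multiset.map_cons, Multiset.count_cons]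
      omega

end Stmt15Aux

namespace Stmt15Aux

lemma isAssign_seconds (β κ : ℕ) (U : Multiset ℕ) (L : List (Config × Config))
    (h : ∀ p ∈ L, IsSubconf β κ U p.1 ∧ IsSubconf β κ U p.2 ∧
      Relation.ReflTransGen (AdjS β κ U) p.1 p.2) :
    IsAssignment κ (Pof L) (L.map Prod.snd) := by
  induction L with
  | nil => exact List.Forall₂.nil
  | cons p L' ih =>
    have hp := h p (List.mem_cons_self)
    exact List.Forall₂.cons ⟨(rtg_card_sum hp.2.2).1, (rtg_card_sum hp.2.2).2, hp.2.1.2.2.1⟩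
      (ih (fun q hq => h q (List.mem_cons_of_mem _ hq)))

end Stmt15Aux

open Stmt15Aux in
theorem stmt15 (β κ : ℕ) (hβ : 0 < β) (hκ : 0 < κ) (CS CT : Config)
    (hS : Legal κ CS) (hT : Legal κ CT)
    (hcard : Multiset.card CS = Multiset.card CT) (hU : CS.sum = CT.sum)
    (hpos : ∀ x ∈ CS.sum, 0 < x) :
    PartitionILPFeasible β κ CS CT ↔ PConformReconf β κ CS CT := by
  set U := CS.sum with hUdef
  constructor
  · rintro ⟨fx, fz, dx, dz, fy, hzero, hfyzero, hdxfin, hdzfin, _, _, hfyfin, hcons, hdem⟩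
    have hfyfin' : (Function.support (fun q : Config × Config => fy q.1 q.2)).Finite := hfyfin
    set E := ofFn dx hdxfin with hEdef
    set Z := ofFn dz hdzfin with hZdef
    set F := ofFn (fun q : Config × Config => fy q.1 q.2) hfyfin' with hFdef
    have hcE : ∀ D, Multiset.count D E = dx D := count_ofFn dx hdxfin
    have hcZ : ∀ D, Multiset.count D Z = dz D := count_ofFn dz hdzfin
    have hcF : ∀ q : Config × Config, Multiset.count q F = fy q.1 q.2 :=
      count_ofFn _ hfyfin'
    have hsubE : ∀ D ∈ E, IsSubconf β κ U D := by
      intro D hD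
      by_contra hnot
      have h0 : dx D = 0 := (hzero D hnot).2.2.1
      have hpos' := Multiset.count_pos.2 hD
      rw [hcE D] at hpos'
      omega
    have hFadj : ∀ q ∈ F, AdjS β κ U q.1 q.2 := by
      intro q hq
      by_contra hnot
      have h0 : fy q.1 q.2 = 0 := hfyzero q.1 q.2 hnot
      have := Multiset.count_pos.2 hq
      rw [hcF q] at this
      omega
    have hconsEZ : ∀ D, Multiset.count D E + Multiset.count D (F.map Prod.snd)
        = Multiset.count D Z + Multiset.count D (F.map Prod.fst) := by
      intro D
      by_cases hD : IsSubconf β κ U D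
      · obtain ⟨e1, e2, e3⟩ := hcons D hD
        have hin : ∑ᶠ D', fy D' D = Multiset.count D (F.map Prod.snd) := by
          rw [← count_map_snd F D]
          exact finsum_congr (fun D' => (hcF (D', D)).symm)
        have hout : ∑ᶠ D', fy D D' = Multiset.count D (F.map Prod.fst) := by
          rw [← count_map_fst F D]
          exact finsum_congr (fun D' => (hcF (D, D')).symm)
        rw [hcE, hcZ, ← e1, ← e2, ← hin, ← hout]
        exact e3
      · have hE0 : Multiset.count D E = 0 := by rw [hcE]; exact (hzero D hD).2.2.1
        have hZ0 : Multiset.count D Z = 0 := by rw [hcZ]; exact (hzero D hD).2.2.2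
        have hs0 : Multiset.count D (F.map Prod.snd) = 0 := by
          apply Multiset.count_eq_zero_of_notMem
          intro hmem
          obtain ⟨q, hqF, hq2⟩ := Multiset.mem_map.1 hmem
          exact hD (hq2 ▸ (hFadj q hqF).2.1)
        have hf0 : Multiset.count D (F.map Prod.fst) = 0 := by
          apply Multiset.count_eq_zero_of_notMem
          intro hmem
          obtain ⟨q, hqF, hq1⟩ := Multiset.mem_map.1 hmem
          exact hD (hq1 ▸ (hFadj q hqF).1)
        omega
    obtain ⟨L, hL, hLfst, hLsnd⟩ := decompose β κ U E F Z hFadj hsubE hconsEZ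
    have hCSE : E.sum = CS := by
      apply Multiset.ext.2
      intro B
      by_cases hgood : B ≤ U ∧ vol B ≤ κ
      · have hd := (hdem B hgood.1 hgood.2).1
        rw [← hd, ← count_sum_mul B E]
        exact (finsum_congr (fun D => by rw [hcE D])).symm
      · rw [Multiset.count_eq_zero_of_notMem, Multiset.count_eq_zero_of_notMem]
        · intro hmem
          exact hgood ⟨Multiset.le_sum_of_mem hmem, hS B hmem⟩
        · intro hmem
          obtain ⟨D, hDE, hBD⟩ := mem_msum hmem
          have hsub := hsubE D hDE
          exact hgood ⟨le_trans (Multiset.le_sum_of_mem hBD) hsub.2.2.2, hsub.2.2.1 B hBD⟩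
    have hCTZ : Z.sum = CT := by
      apply Multiset.ext.2
      intro B
      by_cases hgood : B ≤ U ∧ vol B ≤ κ
      · have hd := (hdem B hgood.1 hgood.2).2
        rw [← hd, ← count_sum_mul B Z]
        exact (finsum_congr (fun D => by rw [hcZ D])).symm
      · rw [Multiset.count_eq_zero_of_notMem, Multiset.count_eq_zero_of_notMem]
        · intro hmem
          refine hgood ⟨?_, hT B hmem⟩
          rw [hU]
          exact Multiset.le_sum_of_mem hmem
        · intro hmem
          obtain ⟨D, hDZ, hBD⟩ := mem_msum hmem
          -- elements of Z are subconfs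
          have hsub : IsSubconf β κ U D := by
            have : D ∈ (↑(L.map Prod.snd) : Multiset Config) := hLsnd ▸ hDZ
            obtain ⟨p, hpL, hp2⟩ := List.mem_map.1 (Multiset.mem_coe.1 this)
            exact hp2 ▸ (hL p hpL).2.1
          exact hgood ⟨le_trans (Multiset.le_sum_of_mem hBD) hsub.2.2.2, hsub.2.2.1 B hBD⟩
    refine ⟨Pof L, ⟨?_, ?_⟩, ?_, L.map Prod.fst, L.map Prod.snd,
      isAssign_firsts β κ U L (fun p hp => (hL p hp).1),
      isAssign_seconds β κ U L hL, ?_, ?_, ?_⟩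
    · intro p' hp'
      obtain ⟨p, hpL, rfl⟩ := List.mem_map.1 hp'
      exact Multiset.card_pos.2 ((hL p hpL).1.1)
    · show ((Pof L).map Prod.fst).sum = U
      have h1 : (Pof L).map Prod.fst = L.map (fun p => p.1.sum) := by
        simp [Pof]
      rw [h1, ← Multiset.sum_coe]
      have h2 : (↑(L.map (fun p => p.1.sum)) : Multiset (Multiset ℕ))
          = (E.map Multiset.sum) := by
        rw [← hLfst]
        rw [← Multiset.map_coe, ← Multiset.map_coe, Multiset.map_map]
        rfl
      rw [h2, sum_map_sum, hCSE]
    · intro p' hp'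
      obtain ⟨p, hpL, rfl⟩ := List.mem_map.1 hp'
      exact (hL p hpL).1.2.1
    · rw [← Multiset.sum_coe, hLfst, hCSE]
    · rw [← Multiset.sum_coe, hLsnd, hCTZ]
    · exact chainOf β κ U L hL
  · rintro ⟨P, hPart, hB, AS, AT, hAS, hAT, hASsum, hATsum, hchain⟩
    obtain ⟨F, hFadj, hcons⟩ := flowOf β κ U P hPart hB AS AT hchain
    refine ⟨fun D => Multiset.count D (↑AS : Multiset Config),
      fun D => Multiset.count D (↑AT : Multiset Config),
      fun D => Multiset.count D (↑AS : Multiset Config),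
      fun D => Multiset.count D (↑AT : Multiset Config),
      fun D D' => Multiset.count ((D, D') : Config × Config) F, ?_, ?_, ?_, ?_, ?_, ?_, ?_, ?_, ?_⟩
    · intro D hD
      have hA : ∀ (A : List Config), IsAssignment κ P A →
          Multiset.count D (↑A : Multiset Config) = 0 := by
        intro A hA
        apply Multiset.count_eq_zero_of_notMem
        intro hmem
        exact hD (assign_mem_sub β κ U P hPart hB A hA D (Multiset.mem_coe.1 hmem))
      exact ⟨hA AS hAS, hA AT hAT, hA AS hAS, hA AT hAT⟩
    · intro D D' hnot
      apply Multiset.count_eq_zero_of_notMem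
      intro hmem
      exact hnot (hFadj (D, D') hmem)
    · exact Set.Finite.subset (Multiset.finite_toSet (↑AS : Multiset Config))
        (fun D hD => Multiset.count_pos.1 (Nat.pos_of_ne_zero hD))
    · exact Set.Finite.subset (Multiset.finite_toSet (↑AT : Multiset Config))
        (fun D hD => Multiset.count_pos.1 (Nat.pos_of_ne_zero hD))
    · exact Set.Finite.subset (Multiset.finite_toSet (↑AS : Multiset Config))
        (fun D hD => Multiset.count_pos.1 (Nat.pos_of_ne_zero hD))
    · exact Set.Finite.subset (Multiset.finite_toSet (↑AT : Multiset Config))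
        (fun D hD => Multiset.count_pos.1 (Nat.pos_of_ne_zero hD))
    · refine Set.Finite.subset (Multiset.finite_toSet F) ?_
      intro q hq
      simp only [Function.mem_support, Function.uncurry] at hq
      exact Multiset.count_pos.1 (Nat.pos_of_ne_zero hq)
    · intro D _
      refine ⟨rfl, rfl, ?_⟩
      have hin : ∑ᶠ D', Multiset.count ((D', D) : Config × Config) F
          = Multiset.count D (F.map Prod.snd) := count_map_snd F D
      have hout : ∑ᶠ D', Multiset.count ((D, D') : Config × Config) F
          = Multiset.count D (F.map Prod.fst) := count_map_fst F D
      rw [hin, hout]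
      exact hcons D
    · intro B _ _
      constructor
      · rw [count_sum_mul B (↑AS : Multiset Config), Multiset.sum_coe, hASsum]
      · rw [count_sum_mul B (↑AT : Multiset Config), Multiset.sum_coe, hATsum]
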